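/- Let Y be a 2-connected ladder and R = R_2(Y). For each i = 1,…,h+1 and every natural number e, the e-th symbolic power of the prime ideal 𝔮_i equals its e-th ordinary power: 𝔮_i^{(e)} = 𝔮_i^e. Equivalently, for all x, s ∈ R with s ∉ 𝔮_i and s·x ∈ 𝔮_i^e, one has x ∈ 𝔮_i^e. -/

import Mathlib

set_option maxHeartbeats 1000000
set_option synthInstance.maxHeartbeats 1000000

open CategoryTheory

namespace LadderDet

/-- The position `p` lies in the `m × n` grid `{1,…,m} × {1,…,n}`. -/
def InGrid (m n : ℕ) (p : ℕ × ℕ) : Prop :=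
  1 ≤ p.1 ∧ p.1 ≤ m ∧ 1 ≤ p.2 ∧ p.2 ≤ n

/-- `Y` is a ladder in the `m × n` grid. -/
def IsLadder (m n : ℕ) (Y : Set (ℕ × ℕ)) : Prop :=
  (∀ p ∈ Y, InGrid m n p) ∧
  ∀ i j p q : ℕ, (i, j) ∈ Y → (p, q) ∈ Y → i ≤ p → j ≤ q → (i, q) ∈ Y ∧ (p, j) ∈ Y

/-- A ladder together with the standard nontriviality assumptions:
`(1,n), (m,1) ∈ Y` and every row and every column of the grid meets `Y`. -/
def StdLadder (m n : ℕ) (Y : Set (ℕ × ℕ)) : Prop :=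
  IsLadder m n Y ∧ (1, n) ∈ Y ∧ (m, 1) ∈ Y ∧
  (∀ i, 1 ≤ i → i ≤ m → ∃ j, (i, j) ∈ Y) ∧
  (∀ j, 1 ≤ j → j ≤ n → ∃ i, (i, j) ∈ Y)

/-- Two positions differ by exactly `1` in exactly one coordinate. -/
def AdjStep (p q : ℕ × ℕ) : Prop :=
  (p.1 = q.1 ∧ (p.2 + 1 = q.2 ∨ q.2 + 1 = p.2)) ∨
  (p.2 = q.2 ∧ (p.1 + 1 = q.1 ∨ q.1 + 1 = p.1))

/-- There is a path in `Y` from `p` to `q`. -/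
def HasPath (Y : Set (ℕ × ℕ)) (p q : ℕ × ℕ) : Prop :=
  p ∈ Y ∧ q ∈ Y ∧
    Relation.ReflTransGen (fun a b => a ∈ Y ∧ b ∈ Y ∧ AdjStep a b) p q

/-- `Y` is path-connected. -/
def PathConnected (Y : Set (ℕ × ℕ)) : Prop :=
  ∀ p ∈ Y, ∀ q ∈ Y, HasPath Y p q

/-- `M` is (the set of entries of) a `t × t` minor of `Y`. -/
def IsMinor (t : ℕ) (Y : Set (ℕ × ℕ)) (M : Set (ℕ × ℕ)) : Prop :=
  ∃ r c : Fin t → ℕ, StrictMono r ∧ StrictMono c ∧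
    (∀ u v, (r u, c v) ∈ Y) ∧ M = {p | ∃ u v, p = (r u, c v)}

/-- `Y` is `t`-disconnected. -/
def TDisconnected (m n t : ℕ) (Y : Set (ℕ × ℕ)) : Prop :=
  ∃ Z₁ Z₂ : Set (ℕ × ℕ), Z₁.Nonempty ∧ Z₂.Nonempty ∧
    IsLadder m n Z₁ ∧ IsLadder m n Z₂ ∧ Z₁ ∩ Z₂ = ∅ ∧ Z₁ ∪ Z₂ = Y ∧
    ∀ M, IsMinor t Y M → M ⊆ Z₁ ∨ M ⊆ Z₂

/-- `Y` is `t`-connected. -/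
def TConnected (m n t : ℕ) (Y : Set (ℕ × ℕ)) : Prop := ¬ TDisconnected m n t Y

/-- `p` is a lower inside corner of `Y`. -/
def IsLowerCorner (Y : Set (ℕ × ℕ)) (p : ℕ × ℕ) : Prop :=
  p ∈ Y ∧ (p.1 - 1, p.2) ∈ Y ∧ (p.1, p.2 - 1) ∈ Y ∧ (p.1 - 1, p.2 - 1) ∉ Y

/-- `p` is an upper inside corner of `Y`. -/
def IsUpperCorner (Y : Set (ℕ × ℕ)) (p : ℕ × ℕ) : Prop :=
  p ∈ Y ∧ (p.1 + 1, p.2) ∈ Y ∧ (p.1, p.2 + 1) ∈ Y ∧ (p.1 + 1, p.2 + 1) ∉ Y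

/-- `Y` is one-sided: path-connected and with no lower or no upper inside corners. -/
def OneSided (Y : Set (ℕ × ℕ)) : Prop :=
  PathConnected Y ∧
  ((∀ p, ¬ IsLowerCorner Y p) ∨ (∀ p, ¬ IsUpperCorner Y p))

/-- `Y` is two-sided: path-connected with at least one lower and one upper inside corner. -/
def TwoSided (Y : Set (ℕ × ℕ)) : Prop :=
  PathConnected Y ∧ (∃ p, IsLowerCorner Y p) ∧ (∃ p, IsUpperCorner Y p)

section Algebra

variable (k : Type) [Field k]

/-- The `t × t` minor of the generic matrix determined by rows `r` and columns `c`,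
as an element of the polynomial ring `k[Y]`. -/
noncomputable def minorPoly {t : ℕ} {Y : Set (ℕ × ℕ)} (r c : Fin t → ℕ)
    (h : ∀ u v, (r u, c v) ∈ Y) : MvPolynomial Y k :=
  (Matrix.of fun u v : Fin t =>
    (MvPolynomial.X ⟨(r u, c v), h u v⟩ : MvPolynomial Y k)).det

/-- The ideal `I_t(Y) ⊆ k[Y]` generated by all `t × t` minors of `X` lying in `Y`. -/
noncomputable def minorIdeal (t : ℕ) (Y : Set (ℕ × ℕ)) : Ideal (MvPolynomial Y k) :=
  Ideal.span {f | ∃ (r c : Fin t → ℕ) (_ : StrictMono r) (_ : StrictMono c)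
    (h : ∀ u v, (r u, c v) ∈ Y), f = minorPoly k r c h}

/-- The ladder determinantal ring `R_t(Y) = k[Y]/I_t(Y)`. -/
abbrev LadderRing (t : ℕ) (Y : Set (ℕ × ℕ)) : Type :=
  MvPolynomial Y k ⧸ minorIdeal k t Y

/-- The residue `x_{ij}` of the variable `X_{ij}` in `R_t(Y)`. -/
noncomputable def xres (t : ℕ) {Y : Set (ℕ × ℕ)} (p : ℕ × ℕ) (hp : p ∈ Y) :
    LadderRing k t Y :=
  Ideal.Quotient.mk (minorIdeal k t Y) (MvPolynomial.X ⟨p, hp⟩)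

/-- The ideal of `R_2(Y)` generated by the residues of the variables in row `r`
(an ideal of type `𝔮`). -/
noncomputable def rowIdeal (Y : Set (ℕ × ℕ)) (r : ℕ) : Ideal (LadderRing k 2 Y) :=
  Ideal.span {z | ∃ q, ∃ h : (r, q) ∈ Y, z = xres k 2 (r, q) h}

/-- The ideal of `R_2(Y)` generated by the residues of the variables in column `b`
(an ideal of type `𝔮'`). -/
noncomputable def colIdeal (Y : Set (ℕ × ℕ)) (b : ℕ) : Ideal (LadderRing k 2 Y) :=
  Ideal.span {z | ∃ p, ∃ h : (p, b) ∈ Y, z = xres k 2 (p, b) h}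

/-- The ideal `𝔭` of `R_2(Y)` generated by the residues of the variables weakly
northwest of the position `(c, d)`. -/
noncomputable def cornerIdeal (Y : Set (ℕ × ℕ)) (c d : ℕ) : Ideal (LadderRing k 2 Y) :=
  Ideal.span {z | ∃ p q, ∃ h : (p, q) ∈ Y, p ≤ c ∧ q ≤ d ∧ z = xres k 2 (p, q) h}

end Algebra

/-- An ideal of `k[Y]` is a monomial ideal if it is generated by monomials. -/
def IsMonomialIdeal {k : Type} [Field k] {Y : Set (ℕ × ℕ)}
    (M : Ideal (MvPolynomial Y k)) : Prop :=
  ∃ S : Set (Y →₀ ℕ), M = Ideal.span ((fun d => MvPolynomial.monomial d (1 : k)) '' S)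

/-- A finitely generated module `C` over a commutative ring `R` is semidualizing if
the natural homothety map `R → Hom_R(C, C)` is bijective and `Ext^i_R(C, C) = 0` for
all `i ≥ 1`. -/
def IsSemidualizing {R : Type} [CommRing R] (C : ModuleCat.{0} R) : Prop :=
  Module.Finite R C ∧
  Function.Bijective (LinearMap.lsmul R C) ∧
  ∀ i : ℕ, 1 ≤ i →
    Subsingleton (((Ext R (ModuleCat.{0} R) i).obj (Opposite.op C)).obj C)

/-- `C` has finite injective dimension: for some `n`, `Ext^i_R(M, C) = 0` for all
modules `M` and all `i > n`. -/
def HasFiniteInjDim {R : Type} [CommRing R] (C : ModuleCat.{0} R) : Prop :=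
  ∃ n : ℕ, ∀ i : ℕ, n < i → ∀ M : ModuleCat.{0} R,
    Subsingleton (((Ext R (ModuleCat.{0} R) i).obj (Opposite.op M)).obj C)


-- ==================== auxiliary development ====================

open MvPolynomial

section Aux

variable (k : Type) [Field k] (Y : Set (ℕ × ℕ))

/-- The Segre-type monomial map `k[Y] → k[u_i, v_j]`, `X_{ij} ↦ u_i v_j`. -/
noncomputable def segre : MvPolynomial Y k →ₐ[k] MvPolynomial (ℕ ⊕ ℕ) k :=
  MvPolynomial.aeval fun v : Y => X (Sum.inl v.1.1) * X (Sum.inr v.1.2)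

variable {Y}

/-- Row/column content of an exponent vector. -/
noncomputable def expMap (μ : Y →₀ ℕ) : (ℕ ⊕ ℕ) →₀ ℕ :=
  μ.sum fun v c => Finsupp.single (Sum.inl v.1.1) c + Finsupp.single (Sum.inr v.1.2) c

/-- A potential function used for termination of straightening. -/
def pot (μ : Y →₀ ℕ) : ℕ := μ.sum fun v c => c * (v.1.1 * v.1.2)

lemma expMap_zero : expMap (0 : Y →₀ ℕ) = 0 := Finsupp.sum_zero_index

lemma expMap_add (μ ν : Y →₀ ℕ) : expMap (μ + ν) = expMap μ + expMap ν := by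
  classical
  exact Finsupp.sum_add_index' (by simp) (by intro a b₁ b₂; simp [Finsupp.single_add]; abel)

lemma expMap_single (v : Y) (c : ℕ) :
    expMap (Finsupp.single v c) =
      Finsupp.single (Sum.inl v.1.1) c + Finsupp.single (Sum.inr v.1.2) c := by
  classical
  exact Finsupp.sum_single_index (by simp)

lemma pot_zero : pot (0 : Y →₀ ℕ) = 0 := Finsupp.sum_zero_index

lemma pot_add (μ ν : Y →₀ ℕ) : pot (μ + ν) = pot μ + pot ν := by
  classical
  exact Finsupp.sum_add_index' (by simp) (by intro a b₁ b₂; ring)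

lemma pot_single (v : Y) (c : ℕ) : pot (Finsupp.single v c) = c * (v.1.1 * v.1.2) := by
  classical
  exact Finsupp.sum_single_index (by simp)

lemma expMap_apply_inl (μ : Y →₀ ℕ) (i : ℕ) :
    expMap μ (Sum.inl i) = ∑ v ∈ μ.support, (if v.1.1 = i then μ v else 0) := by
  classical
  rw [expMap, Finsupp.sum, Finsupp.finset_sum_apply]
  refine Finset.sum_congr rfl fun v _ => ?_
  simp [Finsupp.single_apply]

lemma expMap_apply_inr (μ : Y →₀ ℕ) (j : ℕ) :
    expMap μ (Sum.inr j) = ∑ v ∈ μ.support, (if v.1.2 = j then μ v else 0) := by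
  classical
  rw [expMap, Finsupp.sum, Finsupp.finset_sum_apply]
  refine Finset.sum_congr rfl fun v _ => ?_
  simp [Finsupp.single_apply]

lemma le_expMap_inl (μ : Y →₀ ℕ) (v : Y) : μ v ≤ expMap μ (Sum.inl v.1.1) := by
  classical
  by_cases hv : v ∈ μ.support
  · rw [expMap_apply_inl]
    have := Finset.single_le_sum
      (f := fun w : Y => if w.1.1 = v.1.1 then μ w else 0)
      (fun w _ => by positivity) hv
    simpa using this
  · simp [Finsupp.notMem_support_iff.mp hv]

lemma exists_row_of_expMap_ne_zero (μ : Y →₀ ℕ) (i : ℕ)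
    (h : expMap μ (Sum.inl i) ≠ 0) : ∃ v ∈ μ.support, v.1.1 = i := by
  classical
  rw [expMap_apply_inl] at h
  obtain ⟨v, hv, hv2⟩ := Finset.exists_ne_zero_of_sum_ne_zero h
  exact ⟨v, hv, by by_contra hc; simp [hc] at hv2⟩

lemma exists_col_of_expMap_ne_zero (μ : Y →₀ ℕ) (j : ℕ)
    (h : expMap μ (Sum.inr j) ≠ 0) : ∃ v ∈ μ.support, v.1.2 = j := by
  classical
  rw [expMap_apply_inr] at h
  obtain ⟨v, hv, hv2⟩ := Finset.exists_ne_zero_of_sum_ne_zero h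
  exact ⟨v, hv, by by_contra hc; simp [hc] at hv2⟩

lemma eq_zero_of_expMap_eq_zero {μ : Y →₀ ℕ} (h : expMap μ = 0) : μ = 0 := by
  classical
  by_contra hμ
  obtain ⟨v, hv⟩ := Finsupp.ne_iff.mp hμ
  simp only [Finsupp.coe_zero, Pi.zero_apply] at hv
  have h1 := le_expMap_inl μ v
  rw [h] at h1
  simp only [Finsupp.coe_zero, Pi.zero_apply, Nat.le_zero] at h1
  exact hv h1

lemma segre_monomial (μ : Y →₀ ℕ) :
    segre k Y (monomial μ 1) = monomial (expMap μ) 1 := by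
  classical
  induction μ using Finsupp.induction with
  | zero => simp [expMap_zero, monomial_zero']
  | single_add v c f hv hc ih =>
    rw [show monomial (Finsupp.single v c + f) (1 : k)
        = monomial (Finsupp.single v c) 1 * monomial f 1 by
      rw [monomial_mul, one_mul]]
    rw [map_mul, ih, expMap_add, expMap_single]
    rw [← X_pow_eq_monomial, map_pow]
    have : segre k Y (X v) = X (Sum.inl v.1.1) * X (Sum.inr v.1.2) := by
      simp [segre]
    rw [this, mul_pow, X_pow_eq_monomial, X_pow_eq_monomial, monomial_mul, monomial_mul, one_mul, one_mul]

lemma strictMono_pair {a b : ℕ} (h : a < b) : StrictMono ![a, b] := by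
  intro x y hxy
  fin_cases x <;> fin_cases y <;> simp_all <;> omega

lemma minor_mem {a b p q : ℕ} (h1 : a < p) (h2 : b < q)
    (hab : (a, b) ∈ Y) (haq : (a, q) ∈ Y) (hpb : (p, b) ∈ Y) (hpq : (p, q) ∈ Y) :
    (X ⟨(a, b), hab⟩ * X ⟨(p, q), hpq⟩ - X ⟨(a, q), haq⟩ * X ⟨(p, b), hpb⟩ :
      MvPolynomial Y k) ∈ minorIdeal k 2 Y := by
  apply Ideal.subset_span
  have hfun : ∀ u v : Fin 2, ((![a, p]) u, (![b, q]) v) ∈ Y := by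
    intro u v
    fin_cases u <;> fin_cases v <;> simpa using ‹_›
  refine ⟨![a, p], ![b, q], strictMono_pair h1, strictMono_pair h2, hfun, ?_⟩
  rw [minorPoly, Matrix.det_fin_two]
  simp only [Matrix.of_apply]
  rfl

/-- One straightening move decreasing the potential. -/
lemma exists_move {m n : ℕ} (hlad : IsLadder m n Y) (μ : Y →₀ ℕ) (v w : Y)
    (hv : v ∈ μ.support) (hw : w ∈ μ.support)
    (h1 : v.1.1 < w.1.1) (h2 : v.1.2 < w.1.2) :
    ∃ μ' : Y →₀ ℕ, expMap μ' = expMap μ ∧ pot μ' < pot μ ∧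
      (monomial μ 1 - monomial μ' 1 : MvPolynomial Y k) ∈ minorIdeal k 2 Y := by
  classical
  have hvw : v ≠ w := fun h => absurd (congrArg (fun z : Y => z.1.1) h) (Nat.ne_of_lt h1)
  have hvY : (v.1.1, v.1.2) ∈ Y := by simpa using v.2
  have hwY : (w.1.1, w.1.2) ∈ Y := by simpa using w.2
  obtain ⟨hvq, hwb⟩ := hlad.2 v.1.1 v.1.2 w.1.1 w.1.2 hvY hwY h1.le h2.le
  set v' : Y := ⟨(v.1.1, w.1.2), hvq⟩ with hv'def
  set w' : Y := ⟨(w.1.1, v.1.2), hwb⟩ with hw'def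
  set ρ : Y →₀ ℕ := μ - Finsupp.single v 1 - Finsupp.single w 1 with hρdef
  have hμv : 1 ≤ μ v := Finsupp.mem_support_iff.mp hv |>.bot_lt
  have hμw : 1 ≤ μ w := Finsupp.mem_support_iff.mp hw |>.bot_lt
  have hwv : w ≠ v := Ne.symm hvw
  have hsplit : μ = ρ + Finsupp.single v 1 + Finsupp.single w 1 := by
    ext u
    simp only [hρdef, Finsupp.add_apply, Finsupp.tsub_apply, Finsupp.single_apply]
    rcases eq_or_ne v u with h | h <;> rcases eq_or_ne w u with h' | h'
    · exact absurd (h.trans h'.symm) hvw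
    · subst h; simp_all
    · subst h'; simp [if_neg h]; omega
    · simp [if_neg h, if_neg h']
  set μ' : Y →₀ ℕ := ρ + Finsupp.single v' 1 + Finsupp.single w' 1 with hμ'def
  refine ⟨μ', ?_, ?_, ?_⟩
  · rw [hμ'def, expMap_add, expMap_add, hsplit, expMap_add, expMap_add]
    simp only [expMap_single]
    abel
  · rw [hμ'def, pot_add, pot_add]
    conv_rhs => rw [hsplit, pot_add, pot_add]
    simp only [pot_single, one_mul]
    have : v.1.1 * w.1.2 + w.1.1 * v.1.2 < v.1.1 * v.1.2 + w.1.1 * w.1.2 :=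
      mul_add_mul_lt_mul_add_mul h1 h2
    have hv'1 : v'.1.1 * v'.1.2 = v.1.1 * w.1.2 := rfl
    have hw'1 : w'.1.1 * w'.1.2 = w.1.1 * v.1.2 := rfl
    omega
  · have hmono : ∀ (x y : Y) (hx' : (x.1.1, x.1.2) ∈ Y) (hy' : (y.1.1, y.1.2) ∈ Y),
        (monomial (ρ + Finsupp.single x 1 + Finsupp.single y 1) (1:k))
          = X (⟨(x.1.1, x.1.2), hx'⟩ : Y) * X (⟨(y.1.1, y.1.2), hy'⟩ : Y) * monomial ρ 1 := by
      intro x y hx' hy'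
      have hx : (⟨(x.1.1, x.1.2), hx'⟩ : Y) = x := by ext <;> rfl
      have hy : (⟨(y.1.1, y.1.2), hy'⟩ : Y) = y := by ext <;> rfl
      rw [hx, hy, X, X, monomial_mul, monomial_mul, one_mul, one_mul]
      congr 1
      abel
    rw [hsplit, hμ'def, hmono v w hvY hwY, hmono v' w' hvq hwb]
    have hkey := Ideal.mul_mem_right (monomial ρ (1:k)) _ (minor_mem k h1 h2 hvY hvq hwb hwY)
    rw [sub_mul] at hkey
    exact hkey

/-- In a diagonal-free exponent vector, the point (max row, min col) occurs. -/
lemma corner_mem {μ : Y →₀ ℕ}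
    (hnd : ¬ ∃ v ∈ μ.support, ∃ w ∈ μ.support, v.1.1 < w.1.1 ∧ v.1.2 < w.1.2)
    (h0 : μ ≠ 0) :
    ∃ v ∈ μ.support, (∀ w ∈ μ.support, w.1.1 ≤ v.1.1) ∧ ∀ w ∈ μ.support, v.1.2 ≤ w.1.2 := by
  classical
  push_neg at hnd
  have hne : μ.support.Nonempty := Finsupp.support_nonempty_iff.mpr h0
  have hrne : (μ.support.image fun v : Y => v.1.1).Nonempty := hne.image _
  have hcne : (μ.support.image fun v : Y => v.1.2).Nonempty := hne.image _
  set i := (μ.support.image fun v : Y => v.1.1).max' hrne with hidef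
  set c := (μ.support.image fun v : Y => v.1.2).min' hcne with hcdef
  have hrow : ∀ w ∈ μ.support, w.1.1 ≤ i := by
    intro w hw
    exact Finset.le_max' _ _ (Finset.mem_image_of_mem (fun v : Y => v.1.1) hw)
  have hcol : ∀ w ∈ μ.support, c ≤ w.1.2 := by
    intro w hw
    exact Finset.min'_le _ _ (Finset.mem_image_of_mem (fun v : Y => v.1.2) hw)
  obtain ⟨w, hw, hw2⟩ := Finset.mem_image.mp ((μ.support.image fun v : Y => v.1.2).min'_mem hcne)
  obtain ⟨u, hu, hu2⟩ := Finset.mem_image.mp ((μ.support.image fun v : Y => v.1.1).max'_mem hrne)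
  rcases eq_or_lt_of_le (hrow w hw) with heq | hlt
  · exact ⟨w, hw, by rw [heq]; exact hrow, by rw [hw2]; exact hcol⟩
  · refine ⟨u, hu, by rw [hu2]; exact hrow, ?_⟩
    have h2 : u.1.2 ≤ w.1.2 := hnd w hw u hu (by omega)
    intro z hz
    calc u.1.2 ≤ w.1.2 := h2
      _ = c := hw2
      _ ≤ z.1.2 := hcol z hz

/-- Key straightening lemma: monomials with the same row and column content are
congruent modulo the ideal of 2×2 minors. -/
lemma binomial_mem {m n : ℕ} (hlad : IsLadder m n Y) :
    ∀ (N : ℕ) (μ ν : Y →₀ ℕ), pot μ + pot ν ≤ N → expMap μ = expMap ν →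
      (monomial μ 1 - monomial ν 1 : MvPolynomial Y k) ∈ minorIdeal k 2 Y := by
  classical
  have potpos : ∀ (μ : Y →₀ ℕ) (v : Y), v ∈ μ.support → 1 ≤ pot μ := by
    intro μ v hv
    have h1 : 1 ≤ μ v := (Finsupp.mem_support_iff.mp hv).bot_lt
    obtain ⟨hr, -, hc, -⟩ := hlad.1 v.1 v.2
    have : 1 * (1 * 1) ≤ μ v * (v.1.1 * v.1.2) :=
      Nat.mul_le_mul h1 (Nat.mul_le_mul hr hc)
    calc (1:ℕ) = 1 * (1 * 1) := by norm_num
      _ ≤ μ v * (v.1.1 * v.1.2) := this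
      _ ≤ pot μ := by
          rw [pot, Finsupp.sum]
          exact Finset.single_le_sum (f := fun w : Y => μ w * (w.1.1 * w.1.2))
            (fun w _ => Nat.zero_le _) hv
  intro N
  induction N with
  | zero =>
    intro μ ν hpot hexp
    have hμ : μ = 0 := by
      by_contra h
      obtain ⟨v, hv⟩ := Finsupp.support_nonempty_iff.mpr h
      have := potpos μ v hv
      omega
    have hν : ν = 0 := by
      by_contra h
      obtain ⟨v, hv⟩ := Finsupp.support_nonempty_iff.mpr h
      have := potpos ν v hv
      omega
    rw [hμ, hν, sub_self]
    exact zero_mem _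
  | succ N ih =>
    intro μ ν hpot hexp
    by_cases hμ0 : μ = 0
    · have hν : ν = 0 := eq_zero_of_expMap_eq_zero (by rw [← hexp, hμ0, expMap_zero])
      rw [hμ0, hν, sub_self]; exact zero_mem _
    by_cases hdμ : ∃ v ∈ μ.support, ∃ w ∈ μ.support, v.1.1 < w.1.1 ∧ v.1.2 < w.1.2
    · obtain ⟨v, hv, w, hw, h1, h2⟩ := hdμ
      obtain ⟨μ', he, hp, hmem⟩ := exists_move k hlad μ v w hv hw h1 h2
      have step : (monomial μ' 1 - monomial ν 1 : MvPolynomial Y k) ∈ minorIdeal k 2 Y :=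
        ih μ' ν (by omega) (he.trans hexp)
      have : (monomial μ 1 - monomial ν 1 : MvPolynomial Y k)
          = (monomial μ 1 - monomial μ' 1) + (monomial μ' 1 - monomial ν 1) := by ring
      rw [this]
      exact add_mem hmem step
    by_cases hdν : ∃ v ∈ ν.support, ∃ w ∈ ν.support, v.1.1 < w.1.1 ∧ v.1.2 < w.1.2
    · obtain ⟨v, hv, w, hw, h1, h2⟩ := hdν
      obtain ⟨ν', he, hp, hmem⟩ := exists_move k hlad ν v w hv hw h1 h2
      have step : (monomial μ 1 - monomial ν' 1 : MvPolynomial Y k) ∈ minorIdeal k 2 Y :=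
        ih μ ν' (by omega) (hexp.trans he.symm)
      have : (monomial μ 1 - monomial ν 1 : MvPolynomial Y k)
          = (monomial μ 1 - monomial ν' 1) - (monomial ν 1 - monomial ν' 1) := by ring
      rw [this]
      exact sub_mem step hmem
    -- both diagonal-free: they share the corner point
    · have hν0 : ν ≠ 0 := by
        intro h
        exact hμ0 (eq_zero_of_expMap_eq_zero (by rw [hexp, h, expMap_zero]))
      obtain ⟨v, hv, hvrow, hvcol⟩ := corner_mem hdμ hμ0
      obtain ⟨v₂, hv₂, hv₂row, hv₂col⟩ := corner_mem hdν hν0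
      -- rows present in μ and in ν coincide
      have hrowtrans : ∀ u : Y, u ∈ μ.support → ∃ z ∈ ν.support, z.1.1 = u.1.1 := by
        intro u hu
        apply exists_row_of_expMap_ne_zero
        rw [← hexp]
        have h1 : 1 ≤ μ u := (Finsupp.mem_support_iff.mp hu).bot_lt
        have := le_expMap_inl μ u
        omega
      have hrowtrans' : ∀ u : Y, u ∈ ν.support → ∃ z ∈ μ.support, z.1.1 = u.1.1 := by
        intro u hu
        apply exists_row_of_expMap_ne_zero
        rw [hexp]
        have h1 : 1 ≤ ν u := (Finsupp.mem_support_iff.mp hu).bot_lt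
        have := le_expMap_inl ν u
        omega
      have hcoltrans : ∀ u : Y, u ∈ μ.support → ∃ z ∈ ν.support, z.1.2 = u.1.2 := by
        intro u hu
        apply exists_col_of_expMap_ne_zero
        rw [← hexp]
        have h1 : 1 ≤ μ u := (Finsupp.mem_support_iff.mp hu).bot_lt
        have hle : μ u ≤ expMap μ (Sum.inr u.1.2) := by
          rw [expMap_apply_inr]
          have := Finset.single_le_sum
            (f := fun w : Y => if w.1.2 = u.1.2 then μ w else 0)
            (fun w _ => by positivity) hu
          simpa using this
        omega
      have hcoltrans' : ∀ u : Y, u ∈ ν.support → ∃ z ∈ μ.support, z.1.2 = u.1.2 := by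
        intro u hu
        apply exists_col_of_expMap_ne_zero
        rw [hexp]
        have h1 : 1 ≤ ν u := (Finsupp.mem_support_iff.mp hu).bot_lt
        have hle : ν u ≤ expMap ν (Sum.inr u.1.2) := by
          rw [expMap_apply_inr]
          have := Finset.single_le_sum
            (f := fun w : Y => if w.1.2 = u.1.2 then ν w else 0)
            (fun w _ => by positivity) hu
          simpa using this
        omega
      have hveq : v = v₂ := by
        have hr : v.1.1 = v₂.1.1 := by
          obtain ⟨z, hz, hz2⟩ := hrowtrans v hv
          obtain ⟨z', hz', hz2'⟩ := hrowtrans' v₂ hv₂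
          have := hv₂row z hz
          have := hvrow z' hz'
          omega
        have hc : v.1.2 = v₂.1.2 := by
          obtain ⟨z, hz, hz2⟩ := hcoltrans v hv
          obtain ⟨z', hz', hz2'⟩ := hcoltrans' v₂ hv₂
          have := hv₂col z hz
          have := hvcol z' hz'
          omega
        ext
        · exact hr
        · exact hc
      -- cancel the common variable v
      set ρμ : Y →₀ ℕ := μ - Finsupp.single v 1 with hρμ
      set ρν : Y →₀ ℕ := ν - Finsupp.single v 1 with hρν
      have hμv : 1 ≤ μ v := (Finsupp.mem_support_iff.mp hv).bot_lt
      have hνv : 1 ≤ ν v := (Finsupp.mem_support_iff.mp (hveq ▸ hv₂)).bot_lt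
      have hsplitμ : μ = ρμ + Finsupp.single v 1 := by
        ext u
        simp only [hρμ, Finsupp.add_apply, Finsupp.tsub_apply, Finsupp.single_apply]
        rcases eq_or_ne v u with h | h
        · subst h; simp only [eq_self_iff_true, if_true]; omega
        · simp [if_neg h]
      have hsplitν : ν = ρν + Finsupp.single v 1 := by
        ext u
        simp only [hρν, Finsupp.add_apply, Finsupp.tsub_apply, Finsupp.single_apply]
        rcases eq_or_ne v u with h | h
        · subst h; simp only [eq_self_iff_true, if_true]; omega
        · simp [if_neg h]
      have hexpρ : expMap ρμ = expMap ρν := by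
        have h1 : expMap ρμ + expMap (Finsupp.single v 1)
            = expMap ρν + expMap (Finsupp.single v 1) := by
          rw [← expMap_add, ← expMap_add, ← hsplitμ, ← hsplitν, hexp]
        exact add_right_cancel h1
      have hpotρ : pot ρμ + pot ρν ≤ N := by
        have h1 : pot μ = pot ρμ + pot (Finsupp.single v 1) := by
          rw [← pot_add, ← hsplitμ]
        have h2 : pot ν = pot ρν + pot (Finsupp.single v 1) := by
          rw [← pot_add, ← hsplitν]
        have h3 : 1 ≤ pot (Finsupp.single v 1) := by
          rw [pot_single]
          obtain ⟨hr, -, hc, -⟩ := hlad.1 v.1 v.2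
          have := Nat.mul_le_mul hr hc
          omega
        omega
      have hstep := ih ρμ ρν hpotρ hexpρ
      have hfinal : (monomial μ 1 - monomial ν 1 : MvPolynomial Y k)
          = X v * (monomial ρμ 1 - monomial ρν 1) := by
        rw [hsplitμ, hsplitν]
        rw [show (X v : MvPolynomial Y k) = monomial (Finsupp.single v 1) 1 by
          rw [← X_pow_eq_monomial, pow_one]]
        rw [mul_sub, monomial_mul, monomial_mul, one_mul]
        rw [add_comm (ρμ) _, add_comm (ρν) _]
      rw [hfinal]
      exact Ideal.mul_mem_left _ _ hstep

lemma segre_apply_eq (f : MvPolynomial Y k) :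
    segre k Y f = ∑ τ ∈ f.support, coeff τ f • monomial (expMap τ) 1 := by
  conv_lhs => rw [f.as_sum]
  rw [map_sum]
  refine Finset.sum_congr rfl fun τ _ => ?_
  rw [show (monomial τ) (coeff τ f) = coeff τ f • monomial τ (1:k) by
    rw [smul_monomial, smul_eq_mul, mul_one], map_smul, segre_monomial]

lemma coeff_segre (f : MvPolynomial Y k) (τ : (ℕ ⊕ ℕ) →₀ ℕ) :
    coeff τ (segre k Y f) = ∑ μ ∈ f.support, (if expMap μ = τ then coeff μ f else 0) := by
  classical
  rw [segre_apply_eq, coeff_sum]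
  refine Finset.sum_congr rfl fun μ _ => ?_
  rw [coeff_smul, coeff_monomial, smul_eq_mul]
  by_cases h : expMap μ = τ <;> simp [h]

lemma mem_minorIdeal_of_segre_eq_zero {m n : ℕ} (hlad : IsLadder m n Y) :
    ∀ (N : ℕ) (f : MvPolynomial Y k), f.support.card ≤ N → segre k Y f = 0 →
      f ∈ minorIdeal k 2 Y := by
  classical
  intro N
  induction N with
  | zero =>
    intro f hcard _
    have : f = 0 := by
      rw [← support_eq_empty]
      exact Finset.card_eq_zero.mp (Nat.le_zero.mp hcard)
    rw [this]; exact zero_mem _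
  | succ N ih =>
    intro f hcard hker
    by_cases hf : f = 0
    · rw [hf]; exact zero_mem _
    obtain ⟨μ, hμ⟩ := Finset.nonempty_iff_ne_empty.mpr (fun h => hf (support_eq_empty.mp h))
    have hcoeff : (∑ ν ∈ f.support, if expMap ν = expMap μ then coeff ν f else 0) = 0 := by
      rw [← coeff_segre, hker, coeff_zero]
    rw [← Finset.sum_erase_add _ _ hμ, if_pos rfl] at hcoeff
    have hne : (∑ ν ∈ f.support.erase μ, if expMap ν = expMap μ then coeff ν f else 0) ≠ 0 := by
      intro h
      rw [h, zero_add] at hcoeff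
      exact (mem_support_iff.mp hμ) hcoeff
    obtain ⟨ν, hν, hνne⟩ := Finset.exists_ne_zero_of_sum_ne_zero hne
    have hexp : expMap ν = expMap μ := by
      by_contra h; simp [h] at hνne
    have hνμ : ν ≠ μ := Finset.ne_of_mem_erase hν
    have hνmem : ν ∈ f.support := Finset.mem_of_mem_erase hν
    set g := f - coeff μ f • (monomial μ 1 - monomial ν 1) with hg
    have hgker : segre k Y g = 0 := by
      rw [hg, map_sub, map_smul, map_sub, segre_monomial, segre_monomial, hexp, sub_self,
        smul_zero, sub_zero, hker]
    have hsupp : g.support ⊆ f.support.erase μ := by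
      intro τ hτ
      have hcτ := mem_support_iff.mp hτ
      have hτμ : τ ≠ μ := by
        intro h; subst h
        apply hcτ
        simp [hg, coeff_sub, coeff_smul, coeff_monomial, if_neg hνμ]
      rw [Finset.mem_erase]
      refine ⟨hτμ, ?_⟩
      by_contra h
      apply hcτ
      have h0 : coeff τ f = 0 := notMem_support_iff.mp h
      have hτν : τ ≠ ν := by
        intro hh; subst hh; exact h hνmem
      simp [hg, coeff_sub, coeff_smul, coeff_monomial, h0, if_neg (Ne.symm hτμ),
        if_neg (Ne.symm hτν)]
    have hcard2 : g.support.card ≤ N := by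
      have h1 := Finset.card_le_card hsupp
      have h2 : (f.support.erase μ).card < f.support.card := Finset.card_erase_lt_of_mem hμ
      omega
    have hgmem := ih g hcard2 hgker
    have hbin := binomial_mem k hlad (pot μ + pot ν) μ ν le_rfl hexp.symm
    have hfg : f = g + coeff μ f • (monomial μ 1 - monomial ν 1) := by
      rw [hg]; ring
    rw [hfg]
    refine add_mem hgmem ?_
    rw [smul_eq_C_mul]
    exact Ideal.mul_mem_left _ _ hbin

lemma minorIdeal_le_ker :
    minorIdeal k 2 Y ≤ RingHom.ker (segre k Y).toRingHom := by
  rw [minorIdeal, Ideal.span_le]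
  rintro f ⟨r, c, -, -, h, rfl⟩
  simp only [SetLike.mem_coe, RingHom.mem_ker]
  rw [minorPoly, Matrix.det_fin_two]
  simp only [Matrix.of_apply, AlgHom.toRingHom_eq_coe, RingHom.coe_coe]
  rw [map_sub, map_mul, map_mul]
  have hX : ∀ (u v : Fin 2) (huv : (r u, c v) ∈ Y),
      segre k Y (X ⟨(r u, c v), huv⟩) = X (Sum.inl (r u)) * X (Sum.inr (c v)) := by
    intro u v huv
    simp [segre]
  rw [hX, hX, hX, hX]
  ring

variable (Y) in
/-- The set of row-`r` variables in `k[Y]`. -/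
def rowGens (r : ℕ) : Set (MvPolynomial Y k) :=
  {f | ∃ q, ∃ h : (r, q) ∈ Y, f = X ⟨(r, q), h⟩}

lemma rowIdeal_eq_map (r : ℕ) :
    rowIdeal k Y r = Ideal.map (Ideal.Quotient.mk (minorIdeal k 2 Y))
      (Ideal.span (rowGens k Y r)) := by
  rw [Ideal.map_span, rowIdeal]
  congr 1
  ext z
  constructor
  · rintro ⟨q, h, rfl⟩
    exact ⟨X ⟨(r, q), h⟩, ⟨q, h, rfl⟩, rfl⟩
  · rintro ⟨f, ⟨q, h, rfl⟩, rfl⟩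
    exact ⟨q, h, rfl⟩

lemma monomial_mem_rowPow (r : ℕ) :
    ∀ (e : ℕ) (μ : Y →₀ ℕ), e ≤ expMap μ (Sum.inl r) →
      (monomial μ 1 : MvPolynomial Y k) ∈ Ideal.span (rowGens k Y r) ^ e := by
  classical
  intro e
  induction e with
  | zero => intro μ _; rw [pow_zero, Ideal.one_eq_top]; exact Submodule.mem_top
  | succ e ih =>
    intro μ he
    have hne : expMap μ (Sum.inl r) ≠ 0 := by omega
    obtain ⟨v, hv, hvr⟩ := exists_row_of_expMap_ne_zero μ r hne
    have hμv : 1 ≤ μ v := (Finsupp.mem_support_iff.mp hv).bot_lt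
    set μ' : Y →₀ ℕ := μ - Finsupp.single v 1 with hμ'
    have hsplit : μ = μ' + Finsupp.single v 1 := by
      ext u
      simp only [hμ', Finsupp.add_apply, Finsupp.tsub_apply, Finsupp.single_apply]
      rcases eq_or_ne v u with h | h
      · subst h; simp only [eq_self_iff_true, if_true]; omega
      · simp [if_neg h]
    have hcount : expMap μ (Sum.inl r) = expMap μ' (Sum.inl r) + 1 := by
      conv_lhs => rw [hsplit]
      rw [expMap_add, Finsupp.add_apply, expMap_single, Finsupp.add_apply,
        Finsupp.single_apply, Finsupp.single_apply]
      simp [hvr]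
    have hμ'e : e ≤ expMap μ' (Sum.inl r) := by omega
    have hXv : (X v : MvPolynomial Y k) ∈ Ideal.span (rowGens k Y r) := by
      apply Ideal.subset_span
      refine ⟨v.1.2, ?_, ?_⟩
      · rw [← hvr]; simpa using v.2
      · have hvv : v = ⟨(r, v.1.2), by rw [← hvr]; simpa using v.2⟩ := by
          apply Subtype.ext
          apply Prod.ext
          · exact hvr
          · rfl
        exact congrArg X hvv
    have : (monomial μ 1 : MvPolynomial Y k) = monomial μ' 1 * X v := by
      rw [show (X v : MvPolynomial Y k) = monomial (Finsupp.single v 1) 1 by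
        rw [← X_pow_eq_monomial, pow_one], monomial_mul, one_mul, ← hsplit]
    rw [this, pow_succ]
    exact Ideal.mul_mem_mul (ih μ' hμ'e) hXv

lemma coeff_eq_zero_of_dvd_pow {r e : ℕ} {g : MvPolynomial (ℕ ⊕ ℕ) k}
    (hdvd : (X (Sum.inl r) : MvPolynomial (ℕ ⊕ ℕ) k) ^ e ∣ g)
    {τ : (ℕ ⊕ ℕ) →₀ ℕ} (hτ : τ (Sum.inl r) < e) : coeff τ g = 0 := by
  classical
  obtain ⟨h, rfl⟩ := hdvd
  rw [X_pow_eq_monomial, coeff_monomial_mul']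
  rw [if_neg]
  intro hle
  have := hle (Sum.inl r)
  simp [Finsupp.single_apply] at this
  omega

/-- Main bridge: membership in powers of the row ideal is detected by the Segre map. -/
lemma mem_rowPow_iff {m n : ℕ} (hlad : IsLadder m n Y) (r e : ℕ) (F : MvPolynomial Y k) :
    Ideal.Quotient.mk (minorIdeal k 2 Y) F ∈ rowIdeal k Y r ^ e ↔
      (X (Sum.inl r) : MvPolynomial (ℕ ⊕ ℕ) k) ^ e ∣ segre k Y F := by
  classical
  rw [rowIdeal_eq_map, ← Ideal.map_pow, Ideal.mem_quotient_iff_mem_sup]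
  constructor
  · intro hF
    obtain ⟨a, ha, b, hb, rfl⟩ := Submodule.mem_sup.mp hF
    have hb0 : segre k Y b = 0 := minorIdeal_le_ker k hb
    rw [map_add, hb0, add_zero]
    have h1 : segre k Y a ∈ Ideal.map (segre k Y).toRingHom (Ideal.span (rowGens k Y r) ^ e) :=
      Ideal.mem_map_of_mem _ ha
    rw [Ideal.map_pow, Ideal.map_span] at h1
    have h2 : Ideal.span ((segre k Y).toRingHom '' rowGens k Y r) ≤
        Ideal.span {(X (Sum.inl r) : MvPolynomial (ℕ ⊕ ℕ) k)} := by
      rw [Ideal.span_le]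
      rintro z ⟨f, ⟨q, h, rfl⟩, rfl⟩
      simp only [AlgHom.toRingHom_eq_coe, RingHom.coe_coe]
      have hseg : segre k Y (X ⟨(r, q), h⟩) = X (Sum.inl r) * X (Sum.inr q) := by
        simp [segre]
      rw [hseg, SetLike.mem_coe, Ideal.mem_span_singleton]
      exact ⟨X (Sum.inr q), rfl⟩
    have h3 := Ideal.pow_right_mono h2 e h1
    rw [Ideal.span_singleton_pow, Ideal.mem_span_singleton] at h3
    exact h3
  · intro hdvd
    rw [Submodule.mem_sup]
    set lows := F.support.filter (fun μ => expMap μ (Sum.inl r) < e) with hlows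
    set highs := F.support.filter (fun μ => ¬ expMap μ (Sum.inl r) < e) with hhighs
    set flow := ∑ μ ∈ lows, monomial μ (coeff μ F) with hflow
    set fhigh := ∑ μ ∈ highs, monomial μ (coeff μ F) with hfhigh
    have hsplitF : flow + fhigh = F := by
      rw [hflow, hfhigh, hlows, hhighs,
        Finset.sum_filter_add_sum_filter_not F.support (fun μ => expMap μ (Sum.inl r) < e)]
      exact F.as_sum.symm
    have hhighmem : fhigh ∈ Ideal.span (rowGens k Y r) ^ e := by
      rw [hfhigh]
      refine Submodule.sum_mem _ fun μ hμ => ?_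
      have hμe : e ≤ expMap μ (Sum.inl r) := by
        have hμ2 := hμ
        rw [hhighs, Finset.mem_filter] at hμ2
        omega
      rw [show (monomial μ) (coeff μ F) = C (coeff μ F) * monomial μ (1:k) by
        rw [C_mul_monomial, mul_one]]
      exact Ideal.mul_mem_left _ _ (monomial_mem_rowPow k r e μ hμe)
    have hcoefflow : ∀ τ : (ℕ ⊕ ℕ) →₀ ℕ,
        coeff τ (segre k Y flow) = ∑ μ ∈ lows, (if expMap μ = τ then coeff μ F else 0) := by
      intro τ
      rw [hflow, map_sum, coeff_sum]
      refine Finset.sum_congr rfl fun μ _ => ?_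
      rw [show (monomial μ) (coeff μ F) = coeff μ F • monomial μ (1:k) by
        rw [smul_monomial, smul_eq_mul, mul_one], map_smul, segre_monomial, coeff_smul,
        coeff_monomial, smul_eq_mul]
      by_cases h : expMap μ = τ <;> simp [h]
    have hcoeffhigh : ∀ τ : (ℕ ⊕ ℕ) →₀ ℕ,
        coeff τ (segre k Y fhigh) = ∑ μ ∈ highs, (if expMap μ = τ then coeff μ F else 0) := by
      intro τ
      rw [hfhigh, map_sum, coeff_sum]
      refine Finset.sum_congr rfl fun μ _ => ?_
      rw [show (monomial μ) (coeff μ F) = coeff μ F • monomial μ (1:k) by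
        rw [smul_monomial, smul_eq_mul, mul_one], map_smul, segre_monomial, coeff_smul,
        coeff_monomial, smul_eq_mul]
      by_cases h : expMap μ = τ <;> simp [h]
    have hlowker : segre k Y flow = 0 := by
      apply MvPolynomial.ext
      intro τ
      rw [coeff_zero, hcoefflow τ]
      by_cases hτ : τ (Sum.inl r) < e
      · have h1 : coeff τ (segre k Y F) = 0 := coeff_eq_zero_of_dvd_pow k hdvd hτ
        have h2 : coeff τ (segre k Y fhigh) = 0 := by
          rw [hcoeffhigh τ]
          refine Finset.sum_eq_zero fun μ hμ => ?_
          have hμ2 := hμ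
          rw [hhighs, Finset.mem_filter] at hμ2
          have hμe : ¬ expMap μ (Sum.inl r) < e := hμ2.2
          rw [if_neg]
          intro h
          rw [h] at hμe
          exact hμe hτ
        have h3 : coeff τ (segre k Y flow) + coeff τ (segre k Y fhigh)
            = coeff τ (segre k Y F) := by
          rw [← coeff_add, ← map_add, hsplitF]
        rw [hcoefflow τ, h2, add_zero, h1] at h3
        exact h3
      · refine Finset.sum_eq_zero fun μ hμ => ?_
        have hμ2 := hμ
        rw [hlows, Finset.mem_filter] at hμ2
        have hμe : expMap μ (Sum.inl r) < e := hμ2.2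
        rw [if_neg]
        intro h
        rw [h] at hμe
        exact hτ hμe
    have hlowmem : flow ∈ minorIdeal k 2 Y :=
      mem_minorIdeal_of_segre_eq_zero k hlad flow.support.card flow le_rfl hlowker
    exact ⟨fhigh, hhighmem, flow, hlowmem, by rw [add_comm]; exact hsplitF⟩

lemma prime_X_inl (r : ℕ) : Prime (X (Sum.inl r) : MvPolynomial (ℕ ⊕ ℕ) k) := by
  classical
  let e : Option {b : ℕ ⊕ ℕ // b ≠ Sum.inl r} ≃ (ℕ ⊕ ℕ) := Equiv.optionSubtypeNe (Sum.inl r)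
  have h1 : (renameEquiv k e).symm (X (Sum.inl r)) = X (none : Option {b : ℕ ⊕ ℕ // b ≠ Sum.inl r}) := by
    rw [renameEquiv_symm, renameEquiv_apply, rename_X, Equiv.optionSubtypeNe_symm_self]
  refine (MulEquiv.prime_iff ((renameEquiv k e).symm.toRingEquiv.toMulEquiv)).mp ?_
  refine (MulEquiv.prime_iff
    ((optionEquivLeft k {b : ℕ ⊕ ℕ // b ≠ Sum.inl r}).toRingEquiv.toMulEquiv)).mp ?_
  show Prime ((optionEquivLeft k {b : ℕ ⊕ ℕ // b ≠ Sum.inl r})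
    ((renameEquiv k e).symm (X (Sum.inl r))))
  rw [h1, optionEquivLeft_X_none]
  exact Polynomial.prime_X


end Aux

/-- In `R = R_2(Y)` for a `2`-connected ladder `Y`, the symbolic powers
of the height-one primes `𝔮_i` (generated by the residues of the variables in row
`a_{i-1}`, where `a_0 = 1` and `a_1, …, a_h` are the rows of the lower inside corners)
coincide with the ordinary powers:
if `s ∉ 𝔮_i` and `s * x ∈ 𝔮_i ^ e` then `x ∈ 𝔮_i ^ e`. -/
theorem symbolicPower_q_eq_power (m n : ℕ) (k : Type) [Field k] (Y : Set (ℕ × ℕ))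
    (hY : StdLadder m n Y) (hconn : TConnected m n 2 Y)
    (r : ℕ) (hr : r = 1 ∨ ∃ b, IsLowerCorner Y (r, b))
    (e : ℕ) (x s : LadderRing k 2 Y)
    (hs : s ∉ rowIdeal k Y r) (hsx : s * x ∈ rowIdeal k Y r ^ e) :
    x ∈ rowIdeal k Y r ^ e := by
  have hlad : IsLadder m n Y := hY.1
  obtain ⟨F, rfl⟩ := Ideal.Quotient.mk_surjective x
  obtain ⟨S, rfl⟩ := Ideal.Quotient.mk_surjective s
  rw [show ((Ideal.Quotient.mk (minorIdeal k 2 Y)) S * (Ideal.Quotient.mk (minorIdeal k 2 Y)) F)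
    = Ideal.Quotient.mk (minorIdeal k 2 Y) (S * F) from (map_mul _ _ _).symm] at hsx
  rw [mem_rowPow_iff k hlad r e] at hsx
  rw [map_mul] at hsx
  have hsnd : ¬ (MvPolynomial.X (Sum.inl r) : MvPolynomial (ℕ ⊕ ℕ) k) ∣ segre k Y S := by
    intro hdvd
    apply hs
    have := (mem_rowPow_iff k hlad r 1 S).mpr (by rwa [pow_one])
    rwa [show rowIdeal k Y r ^ 1 = rowIdeal k Y r from pow_one _] at this
  have hdvdF := (prime_X_inl k r).pow_dvd_of_dvd_mul_left e hsnd hsx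
  exact (mem_rowPow_iff k hlad r e F).mpr hdvdF

end LadderDet
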